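/- The derivative g' of g is strictly decreasing on the interval (0, ∞) and strictly increasing on the interval (−∞, 0); equivalently, the second derivative of g satisfies g''(t) < 0 for every t > 0 and g''(t) > 0 for every t < 0. -/

import Mathlib

/-- `g'` is strictly decreasing on `(0,∞)` and strictly increasing
on `(−∞,0)`; equivalently `g''(t) < 0` for `t > 0` and `g''(t) > 0` for `t < 0`. -/
theorem stmt_7 (g : ℝ → ℝ) (hg0 : g 0 = 0)
    (hg : ∀ t : ℝ, HasDerivAt g ((1 + 2 * g t ^ 2) ^ (-(1 / 2) : ℝ)) t) :
    StrictAntiOn (deriv g) (Set.Ioi (0 : ℝ)) ∧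
    StrictMonoOn (deriv g) (Set.Iio (0 : ℝ)) ∧
    (∀ t : ℝ, 0 < t → deriv (deriv g) t < 0) ∧
    (∀ t : ℝ, t < 0 → 0 < deriv (deriv g) t) := by
  have hbase : ∀ t : ℝ, (0:ℝ) < 1 + 2 * g t ^ 2 := fun t => by positivity
  have hderiv : deriv g = fun t => (1 + 2 * g t ^ 2) ^ (-(1/2) : ℝ) :=
    funext fun t => (hg t).deriv
  have hmono : StrictMono g := by
    apply strictMono_of_deriv_pos
    intro t
    rw [hderiv]
    exact Real.rpow_pos_of_pos (hbase t) _
  -- comparison of deriv g values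
  have hcomp : ∀ a b : ℝ, g a ^ 2 < g b ^ 2 → deriv g b < deriv g a := by
    intro a b h
    rw [hderiv]
    simp only
    rw [Real.rpow_neg (le_of_lt (hbase a)), Real.rpow_neg (le_of_lt (hbase b))]
    apply inv_strictAnti₀ (Real.rpow_pos_of_pos (hbase a) _)
    exact Real.rpow_lt_rpow (le_of_lt (hbase a)) (by linarith) (by norm_num)
  have hsecond : ∀ t : ℝ, HasDerivAt (deriv g)
      ((4 * g t * (-(1/2)) * (1 + 2 * g t ^ 2) ^ ((-(1/2) : ℝ) - 1)) *
        (1 + 2 * g t ^ 2) ^ (-(1/2) : ℝ)) t := by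
    intro t
    have h1 : HasDerivAt (fun x : ℝ => 1 + 2 * x ^ 2) (4 * g t) (g t) := by
      have := ((hasDerivAt_pow 2 (g t)).const_mul 2).const_add 1
      refine this.congr_deriv ?_
      push_cast; ring
    have h2 : HasDerivAt (fun x : ℝ => (1 + 2 * x ^ 2) ^ (-(1/2) : ℝ))
        (4 * g t * (-(1/2)) * (1 + 2 * g t ^ 2) ^ ((-(1/2):ℝ) - 1)) (g t) :=
      h1.rpow_const (Or.inl (ne_of_gt (hbase t)))
    have h3 := h2.comp t (hg t)
    rw [hderiv]
    exact h3
  have hsd : ∀ t : ℝ, deriv (deriv g) t =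
      (4 * g t * (-(1/2)) * (1 + 2 * g t ^ 2) ^ ((-(1/2) : ℝ) - 1)) *
        (1 + 2 * g t ^ 2) ^ (-(1/2) : ℝ) := fun t => (hsecond t).deriv
  refine ⟨?_, ?_, ?_, ?_⟩
  · intro a ha b hb hab
    have hga : 0 < g a := hg0 ▸ hmono (Set.mem_Ioi.mp ha)
    have hgb : g a < g b := hmono hab
    exact hcomp a b (by nlinarith)
  · intro a ha b hb hab
    have hgb : g b < 0 := hg0 ▸ hmono (Set.mem_Iio.mp hb)
    have hga : g a < g b := hmono hab
    exact hcomp b a (by nlinarith)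
  · intro t ht
    have hgt : 0 < g t := hg0 ▸ hmono ht
    rw [hsd]
    have hA := Real.rpow_pos_of_pos (hbase t) ((-(1/2) : ℝ) - 1)
    have hB := Real.rpow_pos_of_pos (hbase t) ((-(1/2) : ℝ))
    nlinarith [mul_pos (mul_pos hgt hA) hB]
  · intro t ht
    have hgt : g t < 0 := hg0 ▸ hmono ht
    rw [hsd]
    have hA := Real.rpow_pos_of_pos (hbase t) ((-(1/2) : ℝ) - 1)
    have hB := Real.rpow_pos_of_pos (hbase t) ((-(1/2) : ℝ))
    nlinarith [mul_pos (mul_pos (neg_pos.mpr hgt) hA) hB]
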